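/- Let n and k be positive integers with n ≥ 2k ≥ 8, and let r be the remainder of n − 3 upon division by k − 2. Then ex_P(n, 2C_k) ≥ (3 − 1/(k−2))·n + (3 + r)/(k−2) − 5 + max{1 − r, 0}. -/

import Mathlib

open SimpleGraph

/-- A graph is planar if it admits a drawing in the plane: vertices are mapped to distinct
points, each edge is drawn as a simple continuous arc between the images of its endpoints,
the interior of each arc avoids all vertex images, and the interiors of arcs of distinct
edges are pairwise disjoint. -/
def IsPlanar {V : Type*} (G : SimpleGraph V) : Prop :=
  ∃ (pos : V → ℝ × ℝ) (arc : V → V → ℝ → ℝ × ℝ),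
    Function.Injective pos ∧
    (∀ u v, G.Adj u v →
      Continuous (arc u v) ∧
      arc u v 0 = pos u ∧ arc u v 1 = pos v ∧
      Set.InjOn (arc u v) (Set.Icc 0 1) ∧
      (∀ t ∈ Set.Ioo (0:ℝ) 1, ∀ w, arc u v t ≠ pos w) ∧
      (∀ t, arc u v t = arc v u (1 - t))) ∧
    (∀ u v x y, G.Adj u v → G.Adj x y → s(u, v) ≠ s(x, y) →
      ∀ s ∈ Set.Ioo (0:ℝ) 1, ∀ t ∈ Set.Ioo (0:ℝ) 1, arc u v s ≠ arc x y t)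

/-- `G` contains a copy of `H` (i.e. a subgraph isomorphic to `H`). -/
def ContainsCopy {V W : Type*} (G : SimpleGraph V) (H : SimpleGraph W) : Prop :=
  ∃ f : H →g G, Function.Injective f

/-- The planar Turán number: the maximum number of edges of an `H`-free planar graph
on `n` vertices. -/
noncomputable def exP {W : Type*} (n : ℕ) (H : SimpleGraph W) : ℕ :=
  sSup {m | ∃ G : SimpleGraph (Fin n), IsPlanar G ∧ ¬ ContainsCopy G H ∧ G.edgeSet.ncard = m}

/-- The disjoint union of `t` copies of `G`. -/
def copies {V : Type*} (t : ℕ) (G : SimpleGraph V) : SimpleGraph (Fin t × V) where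
  Adj x y := x.1 = y.1 ∧ G.Adj x.2 y.2
  symm := ⟨by rintro ⟨i, a⟩ ⟨j, b⟩ ⟨h1, h2⟩; exact ⟨h1.symm, h2.symm⟩⟩
  loopless := ⟨by rintro ⟨i, a⟩ ⟨_, h⟩; exact G.irrefl h⟩

/-- `C_k^+`: the cycle on `k` vertices together with one pendant edge. -/
def cyclePlus (k : ℕ) : SimpleGraph (Fin k ⊕ Unit) :=
  SimpleGraph.fromRel (fun x y =>
    (∃ a b : Fin k, x = Sum.inl a ∧ y = Sum.inl b ∧ (cycleGraph k).Adj a b) ∨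
    (∃ a : Fin k, (a : ℕ) = 0 ∧ x = Sum.inl a ∧ y = Sum.inr ()))

def myG (n k sp : ℕ) : SimpleGraph (Fin n) where
  Adj a b := a ≠ b ∧ ((a.val < 2 ∨ b.val < 2) ∨
    ((a.val + 1 = b.val ∨ b.val + 1 = a.val) ∧
      ¬ (sp ≤ min a.val b.val - 1 ∧ (k-2) ∣ (min a.val b.val - 1 - sp))))
  symm := ⟨by
    rintro a b ⟨hne, h⟩
    refine ⟨hne.symm, ?_⟩
    rcases h with h | ⟨h1, h2⟩
    · exact Or.inl h.symm
    · exact Or.inr ⟨h1.symm, by rwa [min_comm]⟩⟩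
  loopless := ⟨fun a h => h.1 rfl⟩

lemma myG_adj {n k sp : ℕ} {a b : Fin n} : (myG n k sp).Adj a b ↔ a ≠ b ∧ ((a.val < 2 ∨ b.val < 2) ∨
    ((a.val + 1 = b.val ∨ b.val + 1 = a.val) ∧
      ¬ (sp ≤ min a.val b.val - 1 ∧ (k-2) ∣ (min a.val b.val - 1 - sp)))) := Iff.rfl

lemma adj_cases {n k sp : ℕ} {u v : Fin n} (h : (myG n k sp).Adj u v) (hlt : u.val < v.val) :
    (u.val = 0 ∧ v.val = 1) ∨ (u.val = 0 ∧ 2 ≤ v.val) ∨ (u.val = 1 ∧ 2 ≤ v.val) ∨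
    (2 ≤ u.val ∧ v.val = u.val + 1) := by
  obtain ⟨hne, h2⟩ := h
  rcases h2 with h2 | ⟨h2, -⟩ <;> omega

def pp (n : ℕ) (v : Fin n) : ℝ × ℝ :=
  if v.val = 0 then (0,1) else if v.val = 1 then (0,-1) else ((v.val:ℝ)-1, 0)

def ar (n : ℕ) (u v : Fin n) (t : ℝ) : ℝ × ℝ := (1-t) • pp n u + t • pp n v

lemma ar_def (n : ℕ) (u v : Fin n) (t : ℝ) :
    ar n u v t = ((1-t) * (pp n u).1 + t * (pp n v).1,
      (1-t) * (pp n u).2 + t * (pp n v).2) := rfl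

lemma pp_eq0 {n : ℕ} {v : Fin n} (h : v.val = 0) : pp n v = (0,1) := by simp [pp, h]
lemma pp_eq1 {n : ℕ} {v : Fin n} (h : v.val = 1) : pp n v = (0,-1) := by simp [pp, h]
lemma pp_eq2 {n : ℕ} {v : Fin n} (h : 2 ≤ v.val) : pp n v = ((v.val:ℝ)-1, 0) := by
  have h0 : v.val ≠ 0 := by omega
  have h1 : v.val ≠ 1 := by omega
  simp [pp, h0, h1]

lemma pp_inj (n : ℕ) : Function.Injective (pp n) := by
  intro a b h
  apply Fin.ext
  have tri : ∀ w : Fin n, w.val = 0 ∨ w.val = 1 ∨ 2 ≤ w.val := fun w => by omega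
  rcases tri a with ha | ha | ha <;> rcases tri b with hb | hb | hb
  · omega
  · rw [pp_eq0 ha, pp_eq1 hb, Prod.ext_iff] at h; exfalso; simp at h; linarith
  · rw [pp_eq0 ha, pp_eq2 hb, Prod.ext_iff] at h; exfalso; simp at h
  · rw [pp_eq1 ha, pp_eq0 hb, Prod.ext_iff] at h; exfalso; simp at h; linarith
  · omega
  · rw [pp_eq1 ha, pp_eq2 hb, Prod.ext_iff] at h; exfalso; simp at h
  · rw [pp_eq2 ha, pp_eq0 hb, Prod.ext_iff] at h; exfalso; simp at h
  · rw [pp_eq2 ha, pp_eq1 hb, Prod.ext_iff] at h; exfalso; simp at h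
  · rw [pp_eq2 ha, pp_eq2 hb, Prod.ext_iff] at h
    simp at h
    exact_mod_cast h

lemma arA {n : ℕ} {u v : Fin n} (h0 : u.val = 0) (h1 : v.val = 1) (t : ℝ) :
    ar n u v t = (0, 1-2*t) := by
  rw [ar_def, pp_eq0 h0, pp_eq1 h1]; simp; try ring

lemma arB {n : ℕ} {u v : Fin n} (h0 : u.val = 0) (h2 : 2 ≤ v.val) (t : ℝ) :
    ar n u v t = (t*((v.val:ℝ)-1), 1-t) := by
  rw [ar_def, pp_eq0 h0, pp_eq2 h2]; simp

lemma arC {n : ℕ} {u v : Fin n} (h0 : u.val = 1) (h2 : 2 ≤ v.val) (t : ℝ) :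
    ar n u v t = (t*((v.val:ℝ)-1), t-1) := by
  rw [ar_def, pp_eq1 h0, pp_eq2 h2]; simp; try ring

lemma arD {n : ℕ} {u v : Fin n} (h2 : 2 ≤ u.val) (hv : v.val = u.val + 1) (t : ℝ) :
    ar n u v t = ((u.val:ℝ)-1+t, 0) := by
  have h2' : 2 ≤ v.val := by omega
  rw [ar_def, pp_eq2 h2, pp_eq2 h2', hv]; push_cast; simp; try ring

lemma ar_symm (n : ℕ) (u v : Fin n) (t : ℝ) : ar n u v t = ar n v u (1-t) := by
  rw [ar_def, ar_def, Prod.ext_iff]; constructor <;> (simp; ring)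

section cross
variable {n k sp : ℕ}

lemma no_vertex_ord {u v w : Fin n} (huv : (myG n k sp).Adj u v) (hlt : u.val < v.val)
    {t : ℝ} (ht : t ∈ Set.Ioo (0:ℝ) 1) : ar n u v t ≠ pp n w := by
  obtain ⟨ht0, ht1⟩ := ht
  intro hEq
  have tri : w.val = 0 ∨ w.val = 1 ∨ 2 ≤ w.val := by omega
  rcases adj_cases huv hlt with ⟨h1,h2⟩|⟨h1,h2⟩|⟨h1,h2⟩|⟨h1,h2⟩ <;>
    rcases tri with hw|hw|hw
  · rw [arA h1 h2 t, pp_eq0 hw, Prod.ext_iff] at hEq; simp at hEq; linarith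
  · rw [arA h1 h2 t, pp_eq1 hw, Prod.ext_iff] at hEq; simp at hEq; linarith
  · rw [arA h1 h2 t, pp_eq2 hw, Prod.ext_iff] at hEq
    have : (2:ℝ) ≤ (w.val:ℝ) := by exact_mod_cast hw
    simp at hEq; linarith [hEq.1]
  · rw [arB h1 h2 t, pp_eq0 hw, Prod.ext_iff] at hEq; simp at hEq; linarith [hEq.2]
  · rw [arB h1 h2 t, pp_eq1 hw, Prod.ext_iff] at hEq; simp at hEq; linarith [hEq.2]
  · rw [arB h1 h2 t, pp_eq2 hw, Prod.ext_iff] at hEq; simp at hEq; linarith [hEq.2]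
  · rw [arC h1 h2 t, pp_eq0 hw, Prod.ext_iff] at hEq; simp at hEq; linarith [hEq.2]
  · rw [arC h1 h2 t, pp_eq1 hw, Prod.ext_iff] at hEq; simp at hEq; linarith [hEq.2]
  · rw [arC h1 h2 t, pp_eq2 hw, Prod.ext_iff] at hEq; simp at hEq; linarith [hEq.2]
  · rw [arD h1 h2 t, pp_eq0 hw, Prod.ext_iff] at hEq; simp at hEq
  · rw [arD h1 h2 t, pp_eq1 hw, Prod.ext_iff] at hEq; simp at hEq
  · rw [arD h1 h2 t, pp_eq2 hw, Prod.ext_iff] at hEq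
    simp at hEq
    have hu2 : (2:ℝ) ≤ (u.val:ℝ) := by exact_mod_cast h1
    rcases Nat.lt_or_ge w.val (u.val + 1) with hc | hc
    · have : (w.val:ℝ) ≤ (u.val:ℝ) := by exact_mod_cast Nat.lt_succ_iff.mp hc
      linarith [hEq]
    · have : (u.val:ℝ) + 1 ≤ (w.val:ℝ) := by exact_mod_cast hc
      linarith [hEq]

lemma cross_ord {u v x y : Fin n} (huv : (myG n k sp).Adj u v) (hlt1 : u.val < v.val)
    (hxy : (myG n k sp).Adj x y) (hlt2 : x.val < y.val) (hne : s(u,v) ≠ s(x,y))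
    {a b : ℝ} (ha : a ∈ Set.Ioo (0:ℝ) 1) (hb : b ∈ Set.Ioo (0:ℝ) 1) :
    ar n u v a ≠ ar n x y b := by
  obtain ⟨ha0, ha1⟩ := ha; obtain ⟨hb0, hb1⟩ := hb
  intro hEq
  rcases adj_cases huv hlt1 with ⟨h1,h2⟩|⟨h1,h2⟩|⟨h1,h2⟩|⟨h1,h2⟩ <;>
    rcases adj_cases hxy hlt2 with ⟨g1,g2⟩|⟨g1,g2⟩|⟨g1,g2⟩|⟨g1,g2⟩
  -- AA
  · exact hne (by rw [Fin.ext (show u.val = x.val by omega), Fin.ext (show v.val = y.val by omega)])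
  -- AB
  · rw [arA h1 h2, arB g1 g2, Prod.ext_iff] at hEq
    have : (2:ℝ) ≤ (y.val:ℝ) := by exact_mod_cast g2
    simp at hEq
    rcases hEq.1 with h | h <;> linarith
  -- AC
  · rw [arA h1 h2, arC g1 g2, Prod.ext_iff] at hEq
    have : (2:ℝ) ≤ (y.val:ℝ) := by exact_mod_cast g2
    simp at hEq
    rcases hEq.1 with h | h <;> linarith
  -- AD
  · rw [arA h1 h2, arD g1 g2, Prod.ext_iff] at hEq
    have : (2:ℝ) ≤ (x.val:ℝ) := by exact_mod_cast g1
    simp at hEq; linarith [hEq.1]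
  -- BA
  · rw [arB h1 h2, arA g1 g2, Prod.ext_iff] at hEq
    have : (2:ℝ) ≤ (v.val:ℝ) := by exact_mod_cast h2
    simp at hEq
    rcases hEq.1 with h | h <;> linarith
  -- BB
  · rw [arB h1 h2, arB g1 g2, Prod.ext_iff] at hEq
    simp at hEq
    have hab : a = b := by linarith [hEq.2]
    have h1' := hEq.1
    rw [hab] at h1'
    have h2' := mul_left_cancel₀ (ne_of_gt hb0) h1'
    have hvy : v.val = y.val := by exact_mod_cast (by linarith : (v.val:ℝ) = (y.val:ℝ))
    exact hne (by rw [Fin.ext (show u.val = x.val by omega), Fin.ext hvy])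
  -- BC
  · rw [arB h1 h2, arC g1 g2, Prod.ext_iff] at hEq
    simp at hEq; linarith [hEq.2]
  -- BD
  · rw [arB h1 h2, arD g1 g2, Prod.ext_iff] at hEq
    simp at hEq; linarith [hEq.2]
  -- CA
  · rw [arC h1 h2, arA g1 g2, Prod.ext_iff] at hEq
    have : (2:ℝ) ≤ (v.val:ℝ) := by exact_mod_cast h2
    simp at hEq
    rcases hEq.1 with h | h <;> linarith
  -- CB
  · rw [arC h1 h2, arB g1 g2, Prod.ext_iff] at hEq
    simp at hEq; linarith [hEq.2]
  -- CC
  · rw [arC h1 h2, arC g1 g2, Prod.ext_iff] at hEq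
    simp at hEq
    have hab : a = b := by linarith [hEq.2]
    have h1' := hEq.1
    rw [hab] at h1'
    have h2' := mul_left_cancel₀ (ne_of_gt hb0) h1'
    have hvy : v.val = y.val := by exact_mod_cast (by linarith : (v.val:ℝ) = (y.val:ℝ))
    exact hne (by rw [Fin.ext (show u.val = x.val by omega), Fin.ext hvy])
  -- CD
  · rw [arC h1 h2, arD g1 g2, Prod.ext_iff] at hEq
    simp at hEq; linarith [hEq.2]
  -- DA
  · rw [arD h1 h2, arA g1 g2, Prod.ext_iff] at hEq
    have : (2:ℝ) ≤ (u.val:ℝ) := by exact_mod_cast h1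
    simp at hEq; linarith [hEq.1]
  -- DB
  · rw [arD h1 h2, arB g1 g2, Prod.ext_iff] at hEq
    simp at hEq; linarith [hEq.2]
  -- DC
  · rw [arD h1 h2, arC g1 g2, Prod.ext_iff] at hEq
    simp at hEq; linarith [hEq.2]
  -- DD
  · rw [arD h1 h2, arD g1 g2, Prod.ext_iff] at hEq
    simp at hEq
    rcases lt_trichotomy u.val x.val with hc | hc | hc
    · have : (u.val:ℝ) + 1 ≤ (x.val:ℝ) := by exact_mod_cast hc
      linarith [hEq]
    · have : v.val = y.val := by omega
      exact hne (by rw [Fin.ext hc, Fin.ext this])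
    · have : (x.val:ℝ) + 1 ≤ (u.val:ℝ) := by exact_mod_cast hc
      linarith [hEq]

end cross

lemma myG_isPlanar (n k sp : ℕ) : IsPlanar (myG n k sp) := by
  classical
  refine ⟨pp n, ar n, pp_inj n, ?_, ?_⟩
  · intro u v huv
    refine ⟨?_, ?_, ?_, ?_, ?_, fun t => ar_symm n u v t⟩
    · unfold ar
      fun_prop
    · rw [ar_def]; norm_num
    · rw [ar_def]; norm_num
    · intro a _ b _ h
      by_contra hab
      have hpq : pp n u ≠ pp n v := fun he => huv.ne (pp_inj n he)
      rw [ar_def, ar_def, Prod.ext_iff] at h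
      obtain ⟨e1, e2⟩ := h
      have d1 : (a - b) * ((pp n v).1 - (pp n u).1) = 0 := by linear_combination e1
      have d2 : (a - b) * ((pp n v).2 - (pp n u).2) = 0 := by linear_combination e2
      have hab' : a - b ≠ 0 := sub_ne_zero_of_ne hab
      have q1 := (mul_eq_zero.mp d1).resolve_left hab'
      have q2 := (mul_eq_zero.mp d2).resolve_left hab'
      exact hpq (Prod.ext_iff.mpr ⟨(sub_eq_zero.mp q1).symm, (sub_eq_zero.mp q2).symm⟩)
    · intro t ht w
      have hvals : u.val ≠ v.val := fun h => huv.ne (Fin.ext h)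
      rcases Nat.lt_or_ge u.val v.val with hlt | hge
      · exact no_vertex_ord huv hlt ht
      · have hlt : v.val < u.val := by omega
        rw [ar_symm]
        exact no_vertex_ord huv.symm hlt ⟨by linarith [ht.2], by linarith [ht.1]⟩
  · intro u v x y huv hxy hne a ha b hb
    have hvals1 : u.val ≠ v.val := fun h => huv.ne (Fin.ext h)
    have hvals2 : x.val ≠ y.val := fun h => hxy.ne (Fin.ext h)
    have key : ∀ (u' v' : Fin n) (a' : ℝ), (myG n k sp).Adj u' v' → u'.val < v'.val →
        a' ∈ Set.Ioo (0:ℝ) 1 → ∀ (x' y' : Fin n) (b' : ℝ), (myG n k sp).Adj x' y' →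
        s(u',v') ≠ s(x',y') → b' ∈ Set.Ioo (0:ℝ) 1 → ar n u' v' a' ≠ ar n x' y' b' := by
      intro u' v' a' huv' hlt ha' x' y' b' hxy' hne' hb'
      have hvals' : x'.val ≠ y'.val := fun h => hxy'.ne (Fin.ext h)
      rcases Nat.lt_or_ge x'.val y'.val with hlt2 | hge2
      · exact cross_ord huv' hlt hxy' hlt2 hne' ha' hb'
      · have hlt2 : y'.val < x'.val := by omega
        rw [ar_symm n x' y' b']
        exact cross_ord huv' hlt hxy'.symm hlt2
          (fun h => hne' (h.trans (Sym2.eq_swap))) ha'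
          ⟨by linarith [hb'.2], by linarith [hb'.1]⟩
    rcases Nat.lt_or_ge u.val v.val with hlt | hge
    · exact key u v a huv hlt ha x y b hxy hne hb
    · have hlt : v.val < u.val := by omega
      rw [ar_symm n u v a]
      exact key v u (1-a) huv.symm hlt ⟨by linarith [ha.2], by linarith [ha.1]⟩
        x y b hxy (fun h => hne ((Sym2.eq_swap).trans h)) hb

def rho (k sp j : ℕ) : ℕ := if j ≤ sp then 0 else (j - sp - 1)/(k-2) + 1

lemma div_pred {d x : ℕ} (hd : 0 < d) (hx : 1 ≤ x) (h : ¬ d ∣ x) : (x-1)/d = x/d := by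
  have hmod := Nat.div_add_mod x d
  have hlt : x % d < d := Nat.mod_lt _ hd
  have h0 : x % d ≠ 0 := fun h' => h (Nat.dvd_of_mod_eq_zero h')
  have hx1 : x - 1 = (x % d - 1) + d * (x / d) := by omega
  rw [hx1, Nat.add_mul_div_left _ _ hd, Nat.div_eq_of_lt (by omega)]
  omega

lemma rho_step {k sp i : ℕ} (hk : 4 ≤ k) (h1 : 1 ≤ i)
    (hnc : ¬ (sp ≤ i ∧ (k-2) ∣ (i - sp))) : rho k sp i = rho k sp (i+1) := by
  rcases Nat.lt_or_ge sp (i+1) with hc | hc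
  · -- i ≥ sp
    have hsp : sp ≤ i := by omega
    have hdvd : ¬ (k-2) ∣ (i - sp) := fun h => hnc ⟨hsp, h⟩
    have hgt : sp < i := by
      rcases Nat.lt_or_ge sp i with h | h
      · exact h
      · exfalso; exact hdvd (by rw [show i - sp = 0 by omega]; exact Nat.dvd_zero _)
    unfold rho
    rw [if_neg (by omega), if_neg (by omega)]
    have : (i - sp - 1)/(k-2) = (i + 1 - sp - 1)/(k-2) := by
      have h2 : i + 1 - sp - 1 = i - sp := by omega
      rw [h2]
      exact div_pred (by omega) (by omega) hdvd
    omega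
  · unfold rho
    rw [if_pos (by omega), if_pos (by omega)]

lemma rho_zero {k sp j : ℕ} (h : rho k sp j = 0) : j ≤ sp := by
  by_contra hc
  unfold rho at h
  rw [if_neg hc] at h
  exact Nat.succ_ne_zero _ h

lemma rho_pos_bounds {k sp j : ℕ} (hk : 4 ≤ k) (h : rho k sp j ≠ 0) :
    sp + (rho k sp j - 1)*(k-2) < j ∧ j ≤ sp + (rho k sp j)*(k-2) := by
  have hj : ¬ j ≤ sp := fun hc => h (by unfold rho; rw [if_pos hc])
  unfold rho
  rw [if_neg hj]
  simp only [Nat.add_sub_cancel]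
  set d := k - 2 with hd
  set x := j - sp - 1 with hx
  set D := x / d with hD
  have e : d * D + x % d = x := Nat.div_add_mod x d
  have hm : x % d < d := Nat.mod_lt _ (by omega)
  have h1 : D * d = d * D := mul_comm _ _
  have h2 : (D + 1) * d = d * D + d := by ring
  rw [h1, h2]
  omega

section freeness
variable {n k sp : ℕ}

lemma adj_third {a b : Fin n} (h : (myG n k sp).Adj a b) (ha : 2 ≤ a.val) (hb : 2 ≤ b.val) :
    (a.val + 1 = b.val ∨ b.val + 1 = a.val) ∧
      ¬ (sp ≤ min a.val b.val - 1 ∧ (k-2) ∣ (min a.val b.val - 1 - sp)) := by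
  rcases h.2 with h2 | h2
  · omega
  · exact h2

lemma rho_adj (hk : 4 ≤ k) {a b : Fin n} (h : (myG n k sp).Adj a b) (ha : 2 ≤ a.val)
    (hb : 2 ≤ b.val) : rho k sp (a.val - 1) = rho k sp (b.val - 1) := by
  obtain ⟨hcons, hnc⟩ := adj_third h ha hb
  rcases hcons with hc | hc
  · have hmin : min a.val b.val = a.val := by omega
    rw [hmin] at hnc
    have := rho_step (i := a.val - 1) hk (by omega) hnc
    rw [show b.val - 1 = a.val - 1 + 1 by omega]
    exact this
  · have hmin : min a.val b.val = b.val := by omega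
    rw [hmin] at hnc
    have := rho_step (i := b.val - 1) hk (by omega) hnc
    rw [show a.val - 1 = b.val - 1 + 1 by omega]
    exact this.symm

open Fin.CommRing Fin.NatCast

lemma cyc_adj_succ [NeZero k] (hk : 4 ≤ k) (i : Fin k) : (cycleGraph k).Adj i (i+1) := by
  rw [cycleGraph_adj']
  right
  rw [show i + 1 - i = 1 by ring]
  rw [Fin.val_one', Nat.mod_eq_of_lt (show 1 < k by omega)]

lemma val_add_one [NeZero k] (hk : 4 ≤ k) (j : Fin k) : (j + 1).val = (j.val + 1) % k := by
  rw [Fin.val_add, Fin.val_one', Nat.mod_eq_of_lt (show 1 < k by omega)]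

lemma low_exists [NeZero k] (hk : 4 ≤ k) (g : Fin k → Fin n)
    (hadj : ∀ i, (myG n k sp).Adj (g i) (g (i+1))) (hinj : Function.Injective g) :
    ∃ i, (g i).val < 2 := by
  by_contra hcon
  push_neg at hcon
  obtain ⟨i, -, hmax⟩ := Finset.exists_max_image Finset.univ (fun i => (g i).val)
    ⟨0, Finset.mem_univ 0⟩
  have hne : (i + 1 : Fin k) ≠ i - 1 := by
    intro h
    have h2 : i + 1 + 1 = i := by rw [h]; ring
    have hv := congrArg Fin.val h2
    rw [val_add_one hk, val_add_one hk] at hv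
    have hlt : i.val < k := i.isLt
    rcases Nat.lt_or_ge (i.val + 1) k with hx | hx
    · rw [Nat.mod_eq_of_lt hx] at hv
      rcases Nat.lt_or_ge (i.val + 2) k with hy | hy
      · rw [Nat.mod_eq_of_lt (by omega)] at hv; omega
      · have : i.val + 1 + 1 = k := by omega
        rw [this, Nat.mod_self] at hv; omega
    · have h1 : i.val + 1 = k := by omega
      rw [h1, Nat.mod_self, Nat.mod_eq_of_lt (by omega)] at hv
      omega
  have hadj1 : (myG n k sp).Adj (g i) (g (i + 1)) := hadj i
  have hadj2 : (myG n k sp).Adj (g i) (g (i - 1)) := by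
    have := hadj (i - 1)
    rw [show i - 1 + 1 = i by ring] at this
    exact this.symm
  have key : ∀ b : Fin k, (myG n k sp).Adj (g i) (g b) → (g b).val = (g i).val - 1 := by
    intro b hb
    obtain ⟨hcons, -⟩ := adj_third hb (hcon i) (hcon b)
    have := hmax b (Finset.mem_univ b)
    omega
  have e1 := key _ hadj1
  have e2 := key _ hadj2
  exact hne (hinj (Fin.val_injective (e1.trans e2.symm)))

lemma natCast_ne_zero_fin [NeZero k] {j : ℕ} (h1 : 1 ≤ j) (h2 : j < k) : (j : Fin k) ≠ 0 := by
  intro hz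
  have := congrArg Fin.val hz
  rw [Fin.val_natCast, Nat.mod_eq_of_lt h2] at this
  simp at this
  omega

lemma window [NeZero k] (hk : 4 ≤ k) (g : Fin k → Fin n)
    (hadj : ∀ i, (myG n k sp).Adj (g i) (g (i+1))) (hinj : Function.Injective g)
    (i0 : Fin k) (hone : ∀ i, i ≠ i0 → 2 ≤ (g i).val) :
    ∀ i, i ≠ i0 → (g i).val ≤ sp + 1 := by
  have hne_add : ∀ j : ℕ, 1 ≤ j → j < k → i0 + (j : Fin k) ≠ i0 := by
    intro j h1 h2 h
    have : (j : Fin k) = 0 := by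
      have := congrArg (fun z => z - i0) h
      simpa using this
    exact natCast_ne_zero_fin h1 h2 this
  have main : ∀ j : ℕ, 1 ≤ j → j ≤ k-1 →
      rho k sp ((g (i0 + (j:Fin k))).val - 1) = rho k sp ((g (i0 + (1:ℕ))).val - 1) := by
    intro j h1 h2
    induction j with
    | zero => omega
    | succ m ih =>
      rcases Nat.eq_or_lt_of_le h1 with he | hlt
      · rw [← he]
      · have hm1 : 1 ≤ m := by omega
        have hm2 : m ≤ k - 1 := by omega
        have step : rho k sp ((g (i0 + (m:Fin k))).val - 1)
            = rho k sp ((g (i0 + ((m+1:ℕ):Fin k))).val - 1) := by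
          have hadjm := hadj (i0 + (m : Fin k))
          have hcast : (((m+1:ℕ)) : Fin k) = (m : Fin k) + 1 := by push_cast; ring
          rw [hcast]
          apply rho_adj hk
          · rw [← add_assoc]
            exact hadjm
          · exact hone _ (hne_add m hm1 (by omega))
          · rw [← hcast]
            exact hone _ (hne_add (m+1) (by omega) (by omega))
        rw [← step]
        exact ih hm1 hm2
  set t := rho k sp ((g (i0 + (1:ℕ))).val - 1) with ht
  have hrep : ∀ i, i ≠ i0 → rho k sp ((g i).val - 1) = t := by
    intro i hi
    have hj1 : 1 ≤ (i - i0).val := by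
      rcases Nat.eq_zero_or_pos (i - i0).val with h | h
      · exfalso
        have : i - i0 = 0 := Fin.ext (by simpa using h)
        exact hi (by rwa [sub_eq_zero] at this)
      · omega
    have hj2 : (i - i0).val ≤ k - 1 := by have := (i - i0).isLt; omega
    have hrw : i0 + (((i - i0).val : ℕ) : Fin k) = i := by
      rw [Fin.cast_val_eq_self]
      ring
    have := main (i - i0).val hj1 hj2
    rwa [hrw] at this
  by_cases htz : t = 0
  · intro i hi
    have := hrep i hi
    rw [htz] at this
    have := rho_zero this
    have := hone i hi
    omega
  · exfalso
    have hbounds : ∀ i, i ≠ i0 → sp + (t-1)*(k-2) + 2 ≤ (g i).val ∧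
        (g i).val ≤ sp + t*(k-2) + 1 := by
      intro i hi
      have h2 := hone i hi
      have hb := rho_pos_bounds hk (by rw [hrep i hi]; exact htz)
      rw [hrep i hi] at hb
      omega
    have hginj : Function.Injective (fun i => (g i).val) :=
      fun a b hab => hinj (Fin.val_injective hab)
    have hcard : (Finset.image (fun i => (g i).val) (Finset.univ.erase i0)).card = k - 1 := by
      rw [Finset.card_image_of_injective _ hginj, Finset.card_erase_of_mem (Finset.mem_univ _),
        Finset.card_univ, Fintype.card_fin]
    have hsub : (Finset.image (fun i => (g i).val) (Finset.univ.erase i0)) ⊆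
        Finset.Icc (sp + (t-1)*(k-2) + 2) (sp + t*(k-2) + 1) := by
      intro v hv
      obtain ⟨i, hi, rfl⟩ := Finset.mem_image.mp hv
      have hi' : i ≠ i0 := Finset.ne_of_mem_erase hi
      rw [Finset.mem_Icc]
      exact hbounds i hi'
    have hIcc : (Finset.Icc (sp + (t-1)*(k-2) + 2) (sp + t*(k-2) + 1)).card ≤ k - 2 := by
      rw [Nat.card_Icc]
      have hrel : t * (k-2) = (t-1)*(k-2) + (k-2) := by
        conv_lhs => rw [show t = (t-1)+1 from by omega]
        ring
      omega
    have := (Finset.card_le_card hsub).trans hIcc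
    omega

lemma myG_free (hk : 4 ≤ k) (hsp : sp ≤ 2*k-3) :
    ¬ ContainsCopy (myG n k sp) (copies 2 (cycleGraph k)) := by
  haveI : NeZero k := ⟨by omega⟩
  rintro ⟨f, hf⟩
  set c : Fin k → Fin n := fun i => f (0, i) with hc
  set d : Fin k → Fin n := fun i => f (1, i) with hd
  have hcadj : ∀ i, (myG n k sp).Adj (c i) (c (i+1)) :=
    fun i => f.map_adj ⟨rfl, cyc_adj_succ hk i⟩
  have hdadj : ∀ i, (myG n k sp).Adj (d i) (d (i+1)) :=
    fun i => f.map_adj ⟨rfl, cyc_adj_succ hk i⟩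
  have hcinj : Function.Injective c := by
    intro a b hab
    have := hf hab
    exact (Prod.mk.injEq _ _ _ _).mp this |>.2
  have hdinj : Function.Injective d := by
    intro a b hab
    have := hf hab
    exact (Prod.mk.injEq _ _ _ _).mp this |>.2
  have hdisj : ∀ i j, c i ≠ d j := by
    intro i j h
    have := hf h
    have := (Prod.mk.injEq _ _ _ _).mp this |>.1
    exact absurd this (by decide)
  obtain ⟨ic, hic⟩ := low_exists hk c hcadj hcinj
  obtain ⟨id', hid⟩ := low_exists hk d hdadj hdinj
  have huc : ∀ i, i ≠ ic → 2 ≤ (c i).val := by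
    by_contra hcon
    push_neg at hcon
    obtain ⟨i, hi, hlow⟩ := hcon
    have hne : (c i).val ≠ (c ic).val := fun h => hi (hcinj (Fin.val_injective h))
    have : (d id').val = (c i).val ∨ (d id').val = (c ic).val := by omega
    rcases this with h | h
    · exact hdisj i id' (Fin.val_injective h.symm)
    · exact hdisj ic id' (Fin.val_injective h.symm)
  have hud : ∀ i, i ≠ id' → 2 ≤ (d i).val := by
    by_contra hcon
    push_neg at hcon
    obtain ⟨i, hi, hlow⟩ := hcon
    have hne : (d i).val ≠ (d id').val := fun h => hi (hdinj (Fin.val_injective h))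
    have : (c ic).val = (d i).val ∨ (c ic).val = (d id').val := by omega
    rcases this with h | h
    · exact hdisj ic i (Fin.val_injective h)
    · exact hdisj ic id' (Fin.val_injective h)
  have hcw := window hk c hcadj hcinj ic huc
  have hdw := window hk d hdadj hdinj id' hud
  -- cardinality contradiction
  set Fc := Finset.image (fun i => (c i).val) (Finset.univ.erase ic) with hFc
  set Fd := Finset.image (fun i => (d i).val) (Finset.univ.erase id') with hFd
  have hcardc : Fc.card = k - 1 := by
    rw [hFc, Finset.card_image_of_injective _
      (fun a b hab => hcinj (Fin.val_injective hab)),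
      Finset.card_erase_of_mem (Finset.mem_univ _), Finset.card_univ, Fintype.card_fin]
  have hcardd : Fd.card = k - 1 := by
    rw [hFd, Finset.card_image_of_injective _
      (fun a b hab => hdinj (Fin.val_injective hab)),
      Finset.card_erase_of_mem (Finset.mem_univ _), Finset.card_univ, Fintype.card_fin]
  have hsubc : Fc ⊆ Finset.Icc 2 (sp+1) := by
    intro v hv
    obtain ⟨i, hi, rfl⟩ := Finset.mem_image.mp hv
    have hi' : i ≠ ic := Finset.ne_of_mem_erase hi
    exact Finset.mem_Icc.mpr ⟨huc i hi', hcw i hi'⟩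
  have hsubd : Fd ⊆ Finset.Icc 2 (sp+1) := by
    intro v hv
    obtain ⟨i, hi, rfl⟩ := Finset.mem_image.mp hv
    have hi' : i ≠ id' := Finset.ne_of_mem_erase hi
    exact Finset.mem_Icc.mpr ⟨hud i hi', hdw i hi'⟩
  have hdisjF : Disjoint Fc Fd := by
    rw [Finset.disjoint_left]
    intro v hvc hvd
    obtain ⟨i, -, hiv⟩ := Finset.mem_image.mp hvc
    obtain ⟨j, -, hjv⟩ := Finset.mem_image.mp hvd
    exact hdisj i j (Fin.val_injective (hiv.trans hjv.symm))
  have hunion : (Fc ∪ Fd).card = 2*(k-1) := by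
    rw [Finset.card_union_of_disjoint hdisjF, hcardc, hcardd]
    omega
  have hsubu : Fc ∪ Fd ⊆ Finset.Icc 2 (sp+1) := Finset.union_subset hsubc hsubd
  have := Finset.card_le_card hsubu
  rw [hunion, Nat.card_Icc] at this
  omega

section count
variable {n k sp : ℕ}

def vf (n : ℕ) [NeZero n] (m : ℕ) : Fin n := ⟨m % n, Nat.mod_lt _ (Nat.pos_of_ne_zero (NeZero.ne n))⟩

lemma vf_val [NeZero n] {m : ℕ} (h : m < n) : (vf n m).val = m := Nat.mod_eq_of_lt h

lemma myG_count (hn : 8 ≤ n) (hk : 4 ≤ k) (c₀ : ℕ) (hc : sp + c₀*(k-2) = n-2) :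
    3*n - 6 - c₀ ≤ (myG n k sp).edgeSet.ncard := by
  haveI : NeZero n := ⟨by omega⟩
  classical
  set G := myG n k sp with hG
  -- the three edge families
  set T1 : Finset (Sym2 (Fin n)) :=
    (Finset.univ.filter (fun v : Fin n => 1 ≤ v.val)).image (fun v => s(vf n 0, v)) with hT1
  set T2 : Finset (Sym2 (Fin n)) :=
    (Finset.univ.filter (fun v : Fin n => 2 ≤ v.val)).image (fun v => s(vf n 1, v)) with hT2
  set P : ℕ → Prop := fun j => ¬ (sp ≤ j ∧ (k-2) ∣ (j - sp)) with hP
  set T3 : Finset (Sym2 (Fin n)) :=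
    ((Finset.Icc 1 (n-3)).filter P).image (fun j => s(vf n (j+1), vf n (j+2))) with hT3
  have hv0 : (vf n 0).val = 0 := vf_val (by omega)
  have hv1 : (vf n 1).val = 1 := vf_val (by omega)
  -- membership in the edge set
  have hsub : ↑(T1 ∪ T2 ∪ T3) ⊆ G.edgeSet := by
    intro e he
    simp only [Finset.coe_union, Set.mem_union, Finset.mem_coe] at he
    rcases he with (he | he) | he
    · obtain ⟨v, hv, rfl⟩ := Finset.mem_image.mp he
      rw [Finset.mem_filter] at hv
      rw [mem_edgeSet]
      exact ⟨fun h => by rw [h] at hv0; omega, Or.inl (Or.inl (by omega))⟩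
    · obtain ⟨v, hv, rfl⟩ := Finset.mem_image.mp he
      rw [Finset.mem_filter] at hv
      rw [mem_edgeSet]
      refine ⟨fun h => ?_, Or.inl (Or.inl (by omega))⟩
      rw [h] at hv1; omega
    · obtain ⟨j, hj, rfl⟩ := Finset.mem_image.mp he
      rw [Finset.mem_filter, Finset.mem_Icc] at hj
      obtain ⟨⟨hj1, hj2⟩, hjP⟩ := hj
      have e1 : (vf n (j+1)).val = j+1 := vf_val (by omega)
      have e2 : (vf n (j+2)).val = j+2 := vf_val (by omega)
      rw [mem_edgeSet]
      refine ⟨fun h => by rw [h, e2] at e1; omega, Or.inr ⟨by omega, ?_⟩⟩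
      rw [e1, e2]
      have hmin : min (j+1) (j+2) = j+1 := by omega
      rw [hmin]
      exact hjP
  -- cardinalities
  have hinj1 : Function.Injective (fun v : Fin n => s(vf n 0, v)) :=
    fun a b h => Sym2.congr_right.mp h
  have hinj2 : Function.Injective (fun v : Fin n => s(vf n 1, v)) :=
    fun a b h => Sym2.congr_right.mp h
  have hc1 : T1.card = n - 1 := by
    rw [hT1, Finset.card_image_of_injective _ hinj1]
    have : (Finset.univ.filter (fun v : Fin n => 1 ≤ v.val)) = Finset.univ.erase (vf n 0) := by
      ext v
      simp only [Finset.mem_filter, Finset.mem_erase, Finset.mem_univ, true_and, and_true]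
      simp only [ne_eq, Fin.ext_iff, hv0]
      omega
    rw [this, Finset.card_erase_of_mem (Finset.mem_univ _), Finset.card_univ, Fintype.card_fin]
  have hc2 : T2.card = n - 2 := by
    rw [hT2, Finset.card_image_of_injective _ hinj2]
    have : (Finset.univ.filter (fun v : Fin n => 2 ≤ v.val))
        = (Finset.univ.erase (vf n 0)).erase (vf n 1) := by
      ext v
      simp only [Finset.mem_filter, Finset.mem_erase, Finset.mem_univ, true_and, and_true]
      simp only [ne_eq, Fin.ext_iff, hv0, hv1]
      omega
    rw [this, Finset.card_erase_of_mem, Finset.card_erase_of_mem (Finset.mem_univ _),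
      Finset.card_univ, Fintype.card_fin]
    · omega
    · exact Finset.mem_erase.mpr ⟨fun h => by rw [Fin.ext_iff, hv0, hv1] at h; omega,
        Finset.mem_univ _⟩
  have hc3 : T3.card = ((Finset.Icc 1 (n-3)).filter P).card := by
    rw [hT3]
    apply Finset.card_image_of_injOn
    intro j hj l hl h
    rw [Finset.coe_filter, Set.mem_setOf_eq, Finset.mem_Icc] at hj hl
    have ej1 : (vf n (j+1)).val = j+1 := vf_val (by omega)
    have ej2 : (vf n (j+2)).val = j+2 := vf_val (by omega)
    have el1 : (vf n (l+1)).val = l+1 := vf_val (by omega)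
    have el2 : (vf n (l+2)).val = l+2 := vf_val (by omega)
    rw [Sym2.eq_iff] at h
    rcases h with ⟨h1, -⟩ | ⟨h1, h2⟩
    · have := congrArg Fin.val h1
      rw [ej1, el1] at this
      omega
    · have u1 := congrArg Fin.val h1
      have u2 := congrArg Fin.val h2
      rw [ej1, el2] at u1
      rw [ej2, el1] at u2
      omega
  have hfiltP : (n-3) - c₀ ≤ ((Finset.Icc 1 (n-3)).filter P).card := by
    have htot := Finset.card_filter_add_card_filter_not
      (s := Finset.Icc 1 (n-3)) (p := P)
    have hcut : ((Finset.Icc 1 (n-3)).filter (fun j => ¬ P j)).card ≤ c₀ := by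
      have hle : ((Finset.Icc 1 (n-3)).filter (fun j => ¬ P j)).card
          ≤ (Finset.range c₀).card := by
        apply Finset.card_le_card_of_injOn (fun j => (j - sp)/(k-2))
        · intro j hj
          rw [Finset.mem_coe, Finset.mem_filter, Finset.mem_Icc] at hj
          obtain ⟨⟨h1, h2⟩, h3⟩ := hj
          have h4 : sp ≤ j ∧ (k-2) ∣ (j - sp) := not_not.mp (by simpa [hP] using h3)
          obtain ⟨hsp', t, ht⟩ := h4
          simp only [Finset.mem_coe, Finset.mem_range]
          have hjt : (j - sp)/(k-2) = t := by
            rw [ht]; exact Nat.mul_div_cancel_left _ (by omega)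
          rw [hjt]
          have hcc : (k-2)*c₀ = c₀*(k-2) := mul_comm _ _
          have hmul : (k-2)*t < (k-2)*c₀ := by omega
          exact Nat.lt_of_mul_lt_mul_left hmul
        · intro j hj l hl h
          rw [Finset.coe_filter, Set.mem_setOf_eq, Finset.mem_Icc] at hj hl
          obtain ⟨⟨hj1, hj2⟩, hj3⟩ := hj
          obtain ⟨⟨hl1, hl2⟩, hl3⟩ := hl
          have h4j : sp ≤ j ∧ (k-2) ∣ (j - sp) := not_not.mp (by simpa [hP] using hj3)
          have h4l : sp ≤ l ∧ (k-2) ∣ (l - sp) := not_not.mp (by simpa [hP] using hl3)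
          obtain ⟨hspj, tj, htj⟩ := h4j
          obtain ⟨hspl, tl, htl⟩ := h4l
          have e1 : (j - sp)/(k-2) = tj := by
            rw [htj]; exact Nat.mul_div_cancel_left _ (by omega)
          have e2 : (l - sp)/(k-2) = tl := by
            rw [htl]; exact Nat.mul_div_cancel_left _ (by omega)
          have h' : (j - sp)/(k-2) = (l - sp)/(k-2) := h
          rw [e1, e2] at h'
          subst h'
          omega
      rwa [Finset.card_range] at hle
    rw [Nat.card_Icc] at htot
    omega
  -- disjointness
  have d12 : Disjoint T1 T2 := by
    rw [Finset.disjoint_left]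
    intro e he1 he2
    rw [hT1] at he1; rw [hT2] at he2
    obtain ⟨v, hv, rfl⟩ := Finset.mem_image.mp he1
    obtain ⟨w, hw, h⟩ := Finset.mem_image.mp he2
    rw [Finset.mem_filter] at hv hw
    rw [Sym2.eq_iff] at h
    rcases h with ⟨h1, -⟩ | ⟨-, h2⟩
    · have := congrArg Fin.val h1; rw [hv1, hv0] at this; omega
    · have := congrArg Fin.val h2; rw [hv0] at this; omega
  have d13 : Disjoint T1 T3 := by
    rw [Finset.disjoint_left]
    intro e he1 he3
    rw [hT1] at he1; rw [hT3] at he3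
    obtain ⟨v, hv, rfl⟩ := Finset.mem_image.mp he1
    obtain ⟨j, hj, h⟩ := Finset.mem_image.mp he3
    rw [Finset.mem_filter, Finset.mem_Icc] at hj
    have ej1 : (vf n (j+1)).val = j+1 := vf_val (by omega)
    have ej2 : (vf n (j+2)).val = j+2 := vf_val (by omega)
    rw [Sym2.eq_iff] at h
    rcases h with ⟨h1, -⟩ | ⟨-, h2⟩
    · have := congrArg Fin.val h1; rw [ej1, hv0] at this; omega
    · have := congrArg Fin.val h2; rw [ej2, hv0] at this; omega
  have d23 : Disjoint T2 T3 := by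
    rw [Finset.disjoint_left]
    intro e he2 he3
    rw [hT2] at he2; rw [hT3] at he3
    obtain ⟨v, hv, rfl⟩ := Finset.mem_image.mp he2
    obtain ⟨j, hj, h⟩ := Finset.mem_image.mp he3
    rw [Finset.mem_filter, Finset.mem_Icc] at hj
    have ej1 : (vf n (j+1)).val = j+1 := vf_val (by omega)
    have ej2 : (vf n (j+2)).val = j+2 := vf_val (by omega)
    rw [Sym2.eq_iff] at h
    rcases h with ⟨h1, -⟩ | ⟨-, h2⟩
    · have := congrArg Fin.val h1; rw [ej1, hv1] at this; omega
    · have := congrArg Fin.val h2; rw [ej2, hv1] at this; omega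
  have hUcard : (T1 ∪ T2 ∪ T3).card = T1.card + T2.card + T3.card := by
    rw [Finset.card_union_of_disjoint (Finset.disjoint_union_left.mpr ⟨d13, d23⟩),
      Finset.card_union_of_disjoint d12]
  have hfin := Set.ncard_le_ncard hsub (Set.toFinite _)
  rw [Set.ncard_coe_finset] at hfin
  have : 3*n - 6 - c₀ ≤ (T1 ∪ T2 ∪ T3).card := by
    rw [hUcard, hc1, hc2, hc3]
    omega
  omega
end count


/-- For `n ≥ 2k ≥ 8`, with `r` the remainder of `n - 3` modulo `k - 2`,
`ex_P(n, 2C_k) ≥ (3 - 1/(k-2))·n + (3 + r)/(k-2) - 5 + max {1 - r, 0}`. -/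
theorem stmt_6 (n k : ℕ) (hk : 8 ≤ 2 * k) (hn : 2 * k ≤ n)
    (r : ℕ) (hr : r = (n - 3) % (k - 2)) :
    ((3 : ℝ) - 1 / ((k : ℝ) - 2)) * n + (3 + (r : ℝ)) / ((k : ℝ) - 2) - 5 + max (1 - (r : ℝ)) 0
      ≤ (exP n (copies 2 (cycleGraph k)) : ℝ) := by
  have hk4 : 4 ≤ k := by omega
  have hn8 : 8 ≤ n := by omega
  set q := (n - 3) / (k - 2) with hq
  have hdm : (k-2) * q + r = n - 3 := by
    rw [hq, hr]; exact Nat.div_add_mod _ _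
  have hrlt : r < k - 2 := by rw [hr]; exact Nat.mod_lt _ (by omega)
  have hq2 : 2 ≤ q := by
    by_contra hcon
    interval_cases q <;> omega
  have hq3 : r = 0 → 3 ≤ q := by
    intro hr0
    by_contra hcon
    interval_cases q <;> omega
  set c₀ := if r = 0 then q - 2 else q - 1 with hc₀
  set sp := (n - 2) - c₀ * (k - 2) with hsp
  have hmul : ∀ a b : ℕ, a ≤ b → a * (k-2) ≤ b * (k-2) := fun a b hab =>
    Nat.mul_le_mul_right _ hab
  have hc₀q : c₀ ≤ q := by rw [hc₀]; split <;> omega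
  have hc₀le : c₀ * (k - 2) ≤ n - 3 := by
    calc c₀ * (k-2) ≤ q * (k-2) := hmul _ _ hc₀q
    _ = (k-2) * q := mul_comm _ _
    _ ≤ n - 3 := by omega
  have hcc : sp + c₀ * (k - 2) = n - 2 := by rw [hsp]; omega
  have hspval : sp ≤ 2*k - 3 := by
    rcases Nat.eq_zero_or_pos r with hr0 | hr1
    · have h3 := hq3 hr0
      have : c₀ = q - 2 := by rw [hc₀, if_pos hr0]
      rw [hsp, this]
      have e1 : (q - 2) * (k-2) = (k-2)*q - 2*(k-2) := by
        rw [Nat.sub_mul, mul_comm]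
      omega
    · have : c₀ = q - 1 := by rw [hc₀, if_neg (by omega)]
      rw [hsp, this]
      have e1 : (q - 1) * (k-2) = (k-2)*q - 1*(k-2) := by
        rw [Nat.sub_mul, mul_comm]
      omega
  -- the witness graph
  have hplanar := myG_isPlanar n k sp
  have hfree := myG_free (n := n) hk4 hspval
  have hcount := myG_count hn8 hk4 c₀ hcc
  -- exP lower bound
  set S : Set ℕ := {m | ∃ G : SimpleGraph (Fin n), IsPlanar G ∧
    ¬ ContainsCopy G (copies 2 (cycleGraph k)) ∧ G.edgeSet.ncard = m} with hS
  have hmem : (myG n k sp).edgeSet.ncard ∈ S := ⟨myG n k sp, hplanar, hfree, rfl⟩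
  have hbdd : BddAbove S := by
    refine ⟨(Set.univ : Set (Sym2 (Fin n))).ncard, ?_⟩
    rintro m ⟨G, -, -, rfl⟩
    exact Set.ncard_le_ncard (Set.subset_univ _) (Set.toFinite _)
  have hle : (myG n k sp).edgeSet.ncard ≤ exP n (copies 2 (cycleGraph k)) :=
    le_csSup hbdd hmem
  have hle2 : 3*n - 6 - c₀ ≤ exP n (copies 2 (cycleGraph k)) := le_trans hcount hle
  -- real arithmetic
  have hkr : (0:ℝ) < (k:ℝ) - 2 := by
    have : (4:ℝ) ≤ (k:ℝ) := by exact_mod_cast hk4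
    linarith
  have hcast : ((k:ℝ)-2) * (q:ℝ) + (r:ℝ) = (n:ℝ) - 3 := by
    have h := hdm
    have := congrArg (fun m : ℕ => (m : ℝ)) h
    push_cast [Nat.cast_sub (show 2 ≤ k by omega), Nat.cast_sub (show 3 ≤ n by omega)] at this
    linarith [this]
  have hfin : ((3*n - 6 - c₀ : ℕ) : ℝ) = 3*(n:ℝ) - 6 - (c₀:ℝ) := by
    have h1 : 2 * q ≤ (k-2) * q := Nat.mul_le_mul_right _ (by omega)
    rw [Nat.cast_sub (by omega : c₀ ≤ 3*n - 6), Nat.cast_sub (by omega : 6 ≤ 3*n)]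
    push_cast
    ring
  refine le_trans ?_ ((Nat.cast_le (α := ℝ)).mpr hle2)
  rw [hfin]
  rcases Nat.eq_zero_or_pos r with hr0 | hr1
  · subst hr0
    have h3q := hq3 rfl
    have hcv : (c₀:ℝ) = (q:ℝ) - 2 := by
      rw [hc₀, if_pos rfl, Nat.cast_sub (by omega : 2 ≤ q)]
      norm_num
    rw [hcv]
    have hmax : max (1 - ((0:ℕ):ℝ)) 0 = 1 := by norm_num
    rw [hmax]
    have : ((0:ℕ):ℝ) = 0 := by norm_num
    rw [this]
    apply le_of_eq
    field_simp
    linear_combination hcast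
  · have hcv : (c₀:ℝ) = (q:ℝ) - 1 := by
      rw [hc₀, if_neg (by omega)]
      push_cast [Nat.cast_sub (show 1 ≤ q by omega)]
      ring
    rw [hcv]
    have hmax : max (1 - (r:ℝ)) 0 = 0 := by
      apply max_eq_right
      have : (1:ℝ) ≤ (r:ℝ) := by exact_mod_cast hr1
      linarith
    rw [hmax]
    apply le_of_eq
    field_simp
    linear_combination hcast
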